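/- For every integer n ≥ 4, the wheel W_n satisfies prc(W_n) = n. -/

import Mathlib

open SimpleGraph

variable {V : Type*}

/-- A walk is rainbow under edge colouring `c` if its edges receive pairwise distinct colours. -/
def SimpleGraph.Walk.IsRainbow {G : SimpleGraph V} {u v : V} (c : Sym2 V → ℕ) (p : G.Walk u v) :
    Prop :=
  (p.edges.map c).Nodup

/-- `G` is rainbow connected under the edge colouring `c`: any two vertices are joined by a
rainbow path. -/
def SimpleGraph.RainbowConnected (G : SimpleGraph V) (c : Sym2 V → ℕ) : Prop :=
  ∀ u v : V, ∃ p : G.Walk u v, p.IsPath ∧ p.IsRainbow c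

/-- `c` is a proper edge colouring of `G`: adjacent edges receive distinct colours. -/
def SimpleGraph.IsProperEdgeColoring (G : SimpleGraph V) (c : Sym2 V → ℕ) : Prop :=
  ∀ ⦃u v w : V⦄, G.Adj u v → G.Adj u w → v ≠ w → c s(u, v) ≠ c s(u, w)

/-- The colouring `c` uses at most `k` colours on the edges of `G`. -/
def SimpleGraph.ColorsLE (G : SimpleGraph V) (c : Sym2 V → ℕ) (k : ℕ) : Prop :=
  ∀ e ∈ G.edgeSet, c e < k

/-- The rainbow connection number `rc(G)`. -/
noncomputable def SimpleGraph.rcNumber (G : SimpleGraph V) : ℕ :=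
  sInf {k | ∃ c : Sym2 V → ℕ, G.ColorsLE c k ∧ G.RainbowConnected c}

/-- The proper rainbow connection number `prc(G)`. -/
noncomputable def SimpleGraph.prcNumber (G : SimpleGraph V) : ℕ :=
  sInf {k | ∃ c : Sym2 V → ℕ, G.ColorsLE c k ∧ G.IsProperEdgeColoring c ∧ G.RainbowConnected c}

/-- The chromatic index `χ'(G)`. -/
noncomputable def SimpleGraph.chromaticIndex (G : SimpleGraph V) : ℕ :=
  sInf {k | ∃ c : Sym2 V → ℕ, G.ColorsLE c k ∧ G.IsProperEdgeColoring c}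

/-- The wheel `W n`: a cycle on `n` vertices together with a hub adjacent to all of them. -/
def wheel (n : ℕ) : SimpleGraph (Option (Fin n)) :=
  SimpleGraph.fromRel fun a b =>
    a = none ∨ ∃ i j : Fin n, a = some i ∧ b = some j ∧ (SimpleGraph.cycleGraph n).Adj i j

/-- The colouring function on ordered pairs for the wheel. -/
def wfun (n : ℕ) [NeZero n] : Option (Fin n) → Option (Fin n) → ℕ
  | none, none => 0
  | none, some i => i.val
  | some i, none => i.val
  | some i, some j =>
      if j = i + 1 ∧ i ≠ j + 1 then ((i + 2 : Fin n) : ℕ)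
      else if i = j + 1 ∧ j ≠ i + 1 then ((j + 2 : Fin n) : ℕ) else 0

lemma wfun_symm (n : ℕ) [NeZero n] (a b : Option (Fin n)) : wfun n a b = wfun n b a := by
  cases a <;> cases b <;> simp only [wfun]
  rename_i i j
  by_cases h1 : j = i + 1 ∧ i ≠ j + 1 <;> by_cases h2 : i = j + 1 ∧ j ≠ i + 1
  · exact (h2.2 h1.1).elim
  · rw [if_pos h1, if_neg h2, if_pos h1]
  · rw [if_neg h1, if_pos h2, if_pos h2]
  · rw [if_neg h1, if_neg h2, if_neg h2, if_neg h1]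

/-- The colouring of the wheel. -/
def wcol (n : ℕ) [NeZero n] : Sym2 (Option (Fin n)) → ℕ :=
  Sym2.lift ⟨wfun n, wfun_symm n⟩

lemma wcol_eq (n : ℕ) [NeZero n] (a b : Option (Fin n)) : wcol n s(a, b) = wfun n a b := rfl

lemma wheel_adj_hub (n : ℕ) [NeZero n] (i : Fin n) : (wheel n).Adj none (some i) := by
  simp [wheel, SimpleGraph.fromRel_adj]

theorem stmt9 (n : ℕ) (hn : 4 ≤ n) : (wheel n).prcNumber = n := by
  have hnz : NeZero n := ⟨by omega⟩
  have hval1 : ((1 : Fin n) : ℕ) = 1 := by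
    rw [Fin.val_one' n]; exact Nat.mod_eq_of_lt (by omega)
  have h11 : (1 : Fin n) + 1 = 2 := Fin.ext (by rw [Fin.val_add, hval1]; rfl)
  have hval2 : ((2 : Fin n) : ℕ) = 2 := by
    rw [← h11, Fin.val_add, hval1]; exact Nat.mod_eq_of_lt (by omega)
  have valne : ∀ a b : Fin n, a ≠ b → (a : ℕ) ≠ (b : ℕ) :=
    fun a b h h' => h (Fin.val_injective h')
  have hne1 : ∀ i : Fin n, i ≠ i + 1 := by
    intro i h
    have h' : i + 0 = i + 1 := by rw [add_zero]; exact h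
    have h0 : (0 : Fin n) = 1 := add_left_cancel h'
    apply_fun Fin.val at h0
    rw [Fin.val_zero, hval1] at h0
    omega
  have hne2 : ∀ i : Fin n, i ≠ i + 2 := by
    intro i h
    have h' : i + 0 = i + 2 := by rw [add_zero]; exact h
    have h0 : (0 : Fin n) = 2 := add_left_cancel h'
    apply_fun Fin.val at h0
    rw [Fin.val_zero, hval2] at h0
    omega
  have hne12 : ∀ i : Fin n, i + 1 ≠ i + 2 := by
    intro i h
    have h0 : (1 : Fin n) = 2 := add_left_cancel h
    apply_fun Fin.val at h0
    rw [hval1, hval2] at h0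
    omega
  -- characterization of rim adjacency
  have rim_adj : ∀ i j : Fin n, (wheel n).Adj (some i) (some j) → j = i + 1 ∨ i = j + 1 := by
    intro i j h
    have key : ∀ a b : Fin n, (SimpleGraph.cycleGraph n).Adj a b → b = a + 1 ∨ a = b + 1 := by
      intro a b hab
      rw [SimpleGraph.cycleGraph_adj'] at hab
      rcases hab with h' | h'
      · right
        have h'' : a - b = 1 := Fin.val_injective (by rw [h', hval1])
        have := eq_add_of_sub_eq h''
        rw [add_comm] at this; exact this
      · left
        have h'' : b - a = 1 := Fin.val_injective (by rw [h', hval1])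
        have := eq_add_of_sub_eq h''
        rw [add_comm] at this; exact this
    rw [wheel, SimpleGraph.fromRel_adj] at h
    obtain ⟨-, h | h⟩ := h
    · rcases h with h | ⟨a, b, ha, hb, hab⟩
      · exact absurd h (by simp)
      · simp only [Option.some.injEq] at ha hb
        subst ha; subst hb
        exact key i j hab
    · rcases h with h | ⟨a, b, ha, hb, hab⟩
      · exact absurd h (by simp)
      · simp only [Option.some.injEq] at ha hb
        subst ha; subst hb
        exact (key _ _ hab).symm
  -- colour of rim edge (i, i+1) is (i+2)
  have rimcol : ∀ i : Fin n, wcol n s(some i, some (i + 1)) = ((i + 2 : Fin n) : ℕ) := by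
    intro i
    have hd : wfun n (some i) (some (i + 1)) =
        if (i + 1 : Fin n) = i + 1 ∧ i ≠ (i + 1) + 1 then ((i + 2 : Fin n) : ℕ)
        else if i = (i + 1) + 1 ∧ (i + 1 : Fin n) ≠ i + 1 then (((i + 1) + 2 : Fin n) : ℕ)
        else 0 := rfl
    rw [wcol_eq, hd, if_pos]
    refine ⟨rfl, fun h => hne2 i ?_⟩
    rw [add_assoc, h11] at h
    exact h
  have hubcol : ∀ i : Fin n, wcol n s(none, some i) = i.val := fun i => rfl
  have hubcol' : ∀ i : Fin n, wcol n s(some i, none) = i.val := fun i => rfl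
  -- colour of a general rim edge
  have rim_edge_col : ∀ i j : Fin n, (wheel n).Adj (some i) (some j) →
      (j = i + 1 ∧ wcol n s(some i, some j) = ((i + 2 : Fin n) : ℕ)) ∨
      (i = j + 1 ∧ wcol n s(some i, some j) = ((j + 2 : Fin n) : ℕ)) := by
    intro i j h
    rcases rim_adj i j h with h' | h'
    · left
      refine ⟨h', ?_⟩
      rw [h']
      exact rimcol i
    · right
      refine ⟨h', ?_⟩
      rw [Sym2.eq_swap, h']
      exact rimcol j
  -- the three properties of wcol
  have hCLE : (wheel n).ColorsLE (wcol n) n := by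
    intro e _
    induction e using Sym2.ind with
    | _ a b =>
      rw [wcol_eq]
      cases a <;> cases b <;> simp only [wfun] <;> try split_ifs
      all_goals first | exact Fin.isLt _ | omega
  have hProper : (wheel n).IsProperEdgeColoring (wcol n) := by
    intro u v w huv huw hvw
    match u, v, w with
    | _, none, none => exact absurd rfl hvw
    | none, none, _ => exact absurd rfl huv.ne
    | none, _, none => exact absurd rfl huw.ne
    | none, some i, some j =>
      rw [hubcol, hubcol]
      exact valne _ _ (fun h => hvw (congrArg some h))
    | some i, none, some k =>
      rw [hubcol']
      rcases rim_edge_col i k huw with ⟨h2, hc⟩ | ⟨h2, hc⟩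
      · rw [hc]; exact valne _ _ (hne2 i)
      · rw [hc]
        refine valne _ _ ?_
        rw [h2]
        exact hne12 k
    | some i, some j, none =>
      rw [hubcol']
      rcases rim_edge_col i j huv with ⟨h1, hc⟩ | ⟨h1, hc⟩
      · rw [hc]; exact (valne _ _ (hne2 i)).symm
      · rw [hc]
        refine (valne _ _ ?_).symm
        rw [h1]
        exact hne12 j
    | some i, some j, some k =>
      rcases rim_edge_col i j huv with ⟨h1, hc1⟩ | ⟨h1, hc1⟩ <;>
        rcases rim_edge_col i k huw with ⟨h2, hc2⟩ | ⟨h2, hc2⟩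
      · exact absurd (congrArg some (h1.trans h2.symm)) hvw
      · rw [hc1, hc2]
        refine valne _ _ (fun h => hne1 k ?_)
        have hik : i = k := add_right_cancel h
        rw [hik] at h2
        exact h2
      · rw [hc1, hc2]
        refine valne _ _ (fun h => hne1 i ?_)
        have hji : j = i := add_right_cancel h
        rw [hji] at h1
        exact h1
      · have hjk : j = k := add_right_cancel (h1.symm.trans h2)
        exact absurd (congrArg some hjk) hvw
  have hRC : (wheel n).RainbowConnected (wcol n) := by
    intro u v
    by_cases huv : u = v
    · subst huv
      exact ⟨SimpleGraph.Walk.nil, SimpleGraph.Walk.IsPath.nil, by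
        simp [SimpleGraph.Walk.IsRainbow]⟩
    match u, v with
    | none, none => exact absurd rfl huv
    | none, some i =>
      refine ⟨SimpleGraph.Walk.cons (wheel_adj_hub n i) SimpleGraph.Walk.nil, ?_, ?_⟩
      · simp
      · simp [SimpleGraph.Walk.IsRainbow]
    | some i, none =>
      refine ⟨SimpleGraph.Walk.cons (wheel_adj_hub n i).symm SimpleGraph.Walk.nil, ?_, ?_⟩
      · simp
      · simp [SimpleGraph.Walk.IsRainbow]
    | some i, some j =>
      have hij : i ≠ j := fun h => huv (congrArg some h)
      refine ⟨SimpleGraph.Walk.cons (wheel_adj_hub n i).symm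
        (SimpleGraph.Walk.cons (wheel_adj_hub n j) SimpleGraph.Walk.nil), ?_, ?_⟩
      · simp [SimpleGraph.Walk.isPath_def, hij]
      · simp only [SimpleGraph.Walk.IsRainbow, SimpleGraph.Walk.edges_cons,
          SimpleGraph.Walk.edges_nil, List.map_cons, List.map_nil, List.nodup_cons,
          List.mem_singleton, List.nodup_nil, and_true, List.not_mem_nil, not_false_iff]
        rw [hubcol', hubcol]
        exact valne _ _ hij
  refine le_antisymm ?_ ?_
  · exact Nat.sInf_le ⟨wcol n, hCLE, hProper, hRC⟩
  · refine le_csInf ⟨n, wcol n, hCLE, hProper, hRC⟩ ?_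
    rintro k ⟨c, hle, hproper, -⟩
    have hg : ∀ i : Fin n, c s(none, some i) < k :=
      fun i => hle _ ((wheel n).mem_edgeSet.mpr (wheel_adj_hub n i))
    let g : Fin n → Fin k := fun i => ⟨c s(none, some i), hg i⟩
    have hginj : Function.Injective g := by
      intro i j h
      by_contra hij
      exact hproper (wheel_adj_hub n i) (wheel_adj_hub n j)
        (fun h' => hij (Option.some_injective _ h')) (congrArg Fin.val h)
    simpa using Fintype.card_le_of_injective g hginj
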